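/- Let F be a finite abelian group with |F| ≥ 3. Then λ(F) ≤ (1/|F|) log(|F| − 1), where λ denotes the Lehmer constant. -/

import Mathlib

open Finset

/-- `f` is a finite integer-coefficient linear combination of characters of the
(discrete) abelian group `G`. -/
def IsAddCharComb (G : Type*) [AddCommGroup G] (f : G → ℂ) : Prop :=
  ∃ (s : Finset (AddChar G Circle)) (c : AddChar G Circle → ℤ),
    f = fun x => ∑ χ ∈ s, (c χ : ℂ) * (χ x : ℂ)

/-- The logarithmic Mahler measure of `f` over a finite group, computed with respect to
the normalized (uniform) Haar probability measure. -/
noncomputable def logMahler {G : Type*} [Fintype G] (f : G → ℂ) : ℝ :=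
  (1 / (Fintype.card G : ℝ)) * ∑ x, Real.log (‖f x‖)

/-- The Lehmer constant of a finite abelian group. -/
noncomputable def lehmer (G : Type*) [AddCommGroup G] [Fintype G] : ℝ :=
  sInf {r : ℝ | ∃ f : G → ℂ, IsAddCharComb G f ∧ logMahler f = r ∧ 0 < r}

/-- Lemma 4.4: if `F` is a finite abelian group with `|F| ≥ 3`, then
`λ(F) ≤ (1/|F|) log(|F| - 1)`. -/
theorem lehmer_le_of_three_le_card (F : Type*) [AddCommGroup F] [Fintype F]
    (hF : 3 ≤ Fintype.card F) :
    lehmer F ≤ (1 / (Fintype.card F : ℝ)) * Real.log ((Fintype.card F : ℝ) - 1) := by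
  classical
  haveI : Fintype (AddChar F Circle) :=
    Fintype.ofEquiv (AddChar F ℂ) AddChar.circleEquivComplex.symm.toEquiv
  set n : ℕ := Fintype.card F with hn
  have hn3 : (3 : ℝ) ≤ (n : ℝ) := by exact_mod_cast hF
  set c : AddChar F Circle → ℤ := fun χ => if χ = 1 then 0 else 1 with hc
  set f : F → ℂ := fun x => ∑ χ ∈ (univ : Finset (AddChar F Circle)), (c χ : ℂ) * (χ x : ℂ)
    with hfdef
  -- value of f
  have hfx : ∀ x : F, f x = (if x = 0 then (n : ℂ) else 0) - 1 := by
    intro x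
    have hsum : ∑ ψ : AddChar F Circle, (ψ x : ℂ) = if x = 0 then (n : ℂ) else 0 := by
      rw [show (∑ ψ : AddChar F Circle, (ψ x : ℂ)) = ∑ φ : AddChar F ℂ, φ x from
        AddChar.circleEquivComplex.toEquiv.sum_comp (fun φ : AddChar F ℂ => φ x)]
      exact AddChar.sum_apply_eq_ite x
    have h1 : f x = (∑ ψ : AddChar F Circle, (ψ x : ℂ)) -
        ∑ χ : AddChar F Circle, (if χ = 1 then ((χ x : ℂ)) else 0) := by
      rw [hfdef, ← Finset.sum_sub_distrib]
      refine Finset.sum_congr rfl fun χ _ => ?_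
      by_cases h : χ = 1 <;> simp [hc, h]
    have h2 : ∑ χ : AddChar F Circle, (if χ = 1 then ((χ x : ℂ)) else 0) = 1 := by
      rw [Finset.sum_ite_eq' univ (1 : AddChar F Circle) (fun χ => ((χ x : ℂ)))]
      simp
    rw [h1, h2, hsum]
  -- absolute values
  have habs : ∀ x : F, Real.log (‖f x‖) =
      if x = 0 then Real.log ((n : ℝ) - 1) else 0 := by
    intro x
    rw [hfx x]
    by_cases h : x = 0
    · rw [if_pos h, if_pos h]
      have : (n : ℂ) - 1 = (((n : ℝ) - 1 : ℝ) : ℂ) := by push_cast; ring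
      rw [this, Complex.norm_real, Real.norm_eq_abs, abs_of_nonneg (by linarith)]
    · rw [if_neg h, if_neg h]
      simp
  have hsumlog : ∑ x : F, Real.log (‖f x‖) = Real.log ((n : ℝ) - 1) := by
    rw [Finset.sum_congr rfl fun x _ => habs x]
    simp
  have hm : logMahler f = (1 / (n : ℝ)) * Real.log ((n : ℝ) - 1) := by
    rw [logMahler, hsumlog]
  have hpos : 0 < (1 / (n : ℝ)) * Real.log ((n : ℝ) - 1) := by
    apply mul_pos
    · positivity
    · exact Real.log_pos (by linarith)
  refine csInf_le ⟨0, ?_⟩ ?_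
  · rintro r ⟨g, -, -, hr⟩
    exact le_of_lt hr
  · exact ⟨f, ⟨univ, c, rfl⟩, hm, hpos⟩
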